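/- Let K > 0 and l > 0 be real numbers, and let u : ℝ → ℝ be a continuously differentiable function with u(s) > 0 for all s ∈ [0, l]. Suppose that for every continuously differentiable function f : ℝ → ℝ with f(0) = f(l) = 0 one has ∫₀^l ( u(s) f'(s)² + 2 f(s) u'(s) f'(s) − K u(s) f(s)² ) ds ≥ 0. Then l ≤ 2π / √(3K). -/

import Mathlib

open Real intervalIntegral

lemma length_bound_aux (K x y b r a : ℝ) (hr : 0 < r) (ha : r ^ 2 = a) :
    a * (y * r⁻¹ + x * (-(b / (2 * r)) / r ^ 2)) ^ 2
      + 2 * (x * r⁻¹) * b * (y * r⁻¹ + x * (-(b / (2 * r)) / r ^ 2))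
      - K * a * (x * r⁻¹) ^ 2
    ≤ 4 / 3 * y ^ 2 - K * x ^ 2 := by
  subst ha
  have hrne : r ≠ 0 := hr.ne'
  have h1 : y * r⁻¹ + x * (-(b / (2 * r)) / r ^ 2) = (2 * y * r ^ 2 - x * b) / (2 * r ^ 3) := by
    field_simp
    ring
  rw [h1]
  have hEeq : r ^ 2 * ((2 * y * r ^ 2 - x * b) / (2 * r ^ 3)) ^ 2
      + 2 * (x * r⁻¹) * b * ((2 * y * r ^ 2 - x * b) / (2 * r ^ 3))
      - K * r ^ 2 * (x * r⁻¹) ^ 2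
      = (4 * y ^ 2 * r ^ 4 + 4 * x * y * b * r ^ 2 - 3 * x ^ 2 * b ^ 2) / (4 * r ^ 4)
        - K * x ^ 2 := by
    field_simp
    ring
  rw [hEeq]
  have h4 : (0:ℝ) < 4 * r ^ 4 := by positivity
  have hdiv : (4 * y ^ 2 * r ^ 4 + 4 * x * y * b * r ^ 2 - 3 * x ^ 2 * b ^ 2) / (4 * r ^ 4)
      ≤ 4 / 3 * y ^ 2 := by
    rw [div_le_iff₀ h4]
    nlinarith [sq_nonneg (2 * y * r ^ 2 - 3 * x * b)]
  linarith

theorem length_bound_of_stability (K l : ℝ) (hK : 0 < K) (hl : 0 < l)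
    (u : ℝ → ℝ) (hu : ContDiff ℝ 1 u) (hupos : ∀ s ∈ Set.Icc 0 l, 0 < u s)
    (hstab : ∀ f : ℝ → ℝ, ContDiff ℝ 1 f → f 0 = 0 → f l = 0 →
      0 ≤ ∫ s in (0:ℝ)..l,
        (u s * (deriv f s) ^ 2 + 2 * f s * deriv u s * deriv f s
          - K * u s * (f s) ^ 2)) :
    l ≤ 2 * π / Real.sqrt (3 * K) := by
  -- Step 1: a thickening of [0,l] on which u is positive
  have hU : IsOpen {x : ℝ | 0 < u x} := isOpen_lt continuous_const hu.continuous
  obtain ⟨δ, hδ, hthick⟩ :=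
    (isCompact_Icc (a := (0:ℝ)) (b := l)).exists_thickening_subset_open hU hupos
  -- Step 2: bump function
  set χ : ContDiffBump (l/2) :=
    ⟨l/2 + δ/4, l/2 + δ/2, by positivity, by linarith⟩ with hχdef
  have key : ∀ s : ℝ, dist s (l/2) ≤ l/2 + δ/2 → 0 < u s := by
    intro s hs
    apply hthick
    rw [Metric.mem_thickening_iff]
    rw [Real.dist_eq, abs_le] at hs
    rcases le_total s 0 with h | h
    · exact ⟨0, ⟨le_refl 0, hl.le⟩, by rw [Real.dist_eq, abs_lt]; constructor <;> linarith⟩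
    · rcases le_total l s with h' | h'
      · exact ⟨l, ⟨hl.le, le_refl l⟩, by rw [Real.dist_eq, abs_lt]; constructor <;> linarith⟩
      · exact ⟨s, ⟨h, h'⟩, by rw [Real.dist_eq]; simpa using hδ⟩
  set g : ℝ → ℝ := fun s => χ s * u s + (1 - χ s) * 1 with hgdef
  have hgpos : ∀ s, 0 < g s := by
    intro s
    rcases eq_or_lt_of_le (χ.nonneg (x := s)) with h | h
    · simp [hgdef, ← h]
    · have hsupp : s ∈ Function.support χ := by simpa [Function.mem_support] using h.ne'
      rw [χ.support_eq] at hsupp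
      have hus : 0 < u s := key s (le_of_lt (by simpa [hχdef] using hsupp))
      have h1 := χ.le_one (x := s)
      have h2 : 0 < χ s * u s := mul_pos h hus
      simp only [hgdef]
      nlinarith
  have hgu : ∀ s ∈ Set.Icc (0:ℝ) l, g =ᶠ[nhds s] u := by
    intro s hs
    have hmem : s ∈ Metric.ball (l/2) (l/2 + δ/4) := by
      rw [Metric.mem_ball, Real.dist_eq, abs_lt]
      obtain ⟨h0, h1⟩ := hs
      constructor <;> linarith
    filter_upwards [Metric.isOpen_ball.mem_nhds hmem] with x hx
    have : χ x = 1 := χ.one_of_mem_closedBall (Metric.ball_subset_closedBall hx)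
    simp [hgdef, this]
  have hgC : ContDiff ℝ 1 g :=
    ((χ.contDiff (n := 1)).mul hu).add ((contDiff_const.sub (χ.contDiff (n := 1))).mul contDiff_const)
  have hgne : ∀ s, g s ≠ 0 := fun s => (hgpos s).ne'
  have hsqC : ContDiff ℝ 1 (fun s => (Real.sqrt (g s))⁻¹) :=
    (hgC.sqrt hgne).inv (fun s => (Real.sqrt_pos.2 (hgpos s)).ne')
  set f : ℝ → ℝ := fun s => Real.sin (π * s / l) * (Real.sqrt (g s))⁻¹ with hfdef
  have hfC : ContDiff ℝ 1 f :=
    ((Real.contDiff_sin.of_le le_top).comp ((contDiff_const.mul contDiff_id).div_const l)).mul hsqC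
  have hf0 : f 0 = 0 := by simp [hfdef]
  have hfl : f l = 0 := by
    simp only [hfdef]
    rw [mul_div_assoc, div_self hl.ne', mul_one, Real.sin_pi, zero_mul]
  -- derivative of f
  have hderiv : ∀ s : ℝ, HasDerivAt f
      (Real.cos (π * s / l) * (π / l) * (Real.sqrt (g s))⁻¹
        + Real.sin (π * s / l) * (-(deriv g s / (2 * Real.sqrt (g s))) / (Real.sqrt (g s)) ^ 2)) s := by
    intro s
    have h1 : HasDerivAt (fun s : ℝ => π * s / l) (π / l) s := by
      simpa using ((hasDerivAt_id s).const_mul π).div_const l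
    have h2 : HasDerivAt (fun s : ℝ => Real.sin (π * s / l)) (Real.cos (π * s / l) * (π / l)) s :=
      (Real.hasDerivAt_sin _).comp s h1
    have h3 : HasDerivAt g (deriv g s) s := (hgC.differentiable one_ne_zero s).hasDerivAt
    have h4 := (h3.sqrt (hgne s)).inv (Real.sqrt_pos.2 (hgpos s)).ne'
    exact h2.mul h4
  have hgs : ∀ s ∈ Set.Icc (0:ℝ) l, g s = u s := fun s hs => (hgu s hs).eq_of_nhds
  have hg's : ∀ s ∈ Set.Icc (0:ℝ) l, deriv g s = deriv u s := fun s hs => (hgu s hs).deriv_eq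
  set R : ℝ → ℝ := fun s => 4 / 3 * (Real.cos (π * s / l) * (π / l)) ^ 2
      - K * (Real.sin (π * s / l)) ^ 2 with hRdef
  -- pointwise bound on [0,l]
  have hpt : ∀ s ∈ Set.Icc (0:ℝ) l,
      u s * (deriv f s) ^ 2 + 2 * f s * deriv u s * deriv f s - K * u s * (f s) ^ 2 ≤ R s := by
    intro s hs
    have hus : 0 < u s := hupos s hs
    have hrpos : 0 < Real.sqrt (u s) := Real.sqrt_pos.2 hus
    have hr2 : Real.sqrt (u s) ^ 2 = u s := Real.sq_sqrt hus.le
    have hfs : f s = Real.sin (π * s / l) * (Real.sqrt (u s))⁻¹ := by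
      simp only [hfdef]
      rw [hgs s hs]
    have hdf : deriv f s = Real.cos (π * s / l) * (π / l) * (Real.sqrt (u s))⁻¹
        + Real.sin (π * s / l)
          * (-(deriv u s / (2 * Real.sqrt (u s))) / (Real.sqrt (u s)) ^ 2) := by
      rw [(hderiv s).deriv, hgs s hs, hg's s hs]
    rw [hfs, hdf]
    simp only [hRdef]
    exact length_bound_aux K (Real.sin (π * s / l)) (Real.cos (π * s / l) * (π / l))
      (deriv u s) (Real.sqrt (u s)) (u s) hrpos hr2
  -- integrability
  have hcderf : Continuous (deriv f) := hfC.continuous_deriv le_rfl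
  have hcderu : Continuous (deriv u) := hu.continuous_deriv le_rfl
  have hcsin : Continuous (fun s : ℝ => Real.sin (π * s / l)) :=
    Real.continuous_sin.comp ((continuous_const.mul continuous_id).div_const l)
  have hccos : Continuous (fun s : ℝ => Real.cos (π * s / l)) :=
    Real.continuous_cos.comp ((continuous_const.mul continuous_id).div_const l)
  have hint1 : IntervalIntegrable (fun s => u s * (deriv f s) ^ 2
      + 2 * f s * deriv u s * deriv f s - K * u s * (f s) ^ 2) MeasureTheory.volume 0 l :=
    (((hu.continuous.mul (hcderf.pow 2)).add
      (((continuous_const.mul hfC.continuous).mul hcderu).mul hcderf)).sub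
      ((continuous_const.mul hu.continuous).mul (hfC.continuous.pow 2))).intervalIntegrable 0 l
  have hint2 : IntervalIntegrable R MeasureTheory.volume 0 l :=
    ((continuous_const.mul ((hccos.mul continuous_const).pow 2)).sub
      (continuous_const.mul (hcsin.pow 2))).intervalIntegrable 0 l
  have hmono := intervalIntegral.integral_mono_on hl.le hint1 hint2 hpt
  have h0 := hstab f hfC hf0 hfl
  -- compute the integral of R
  set A : ℝ := 2/3 * (π/l) ^ 2 - K/2 with hAdef
  set B : ℝ := 2/3 * (π/l) ^ 2 + K/2 with hBdef
  set F : ℝ → ℝ := fun s => A * s + B * (l / (2 * π)) * Real.sin (2 * π * s / l) with hFdef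
  have hFderiv : ∀ s ∈ Set.uIcc (0:ℝ) l, HasDerivAt F (R s) s := by
    intro s _
    have h1 : HasDerivAt (fun s : ℝ => 2 * π * s / l) (2 * π / l) s := by
      simpa using ((hasDerivAt_id s).const_mul (2 * π)).div_const l
    have h2 : HasDerivAt (fun s : ℝ => Real.sin (2 * π * s / l))
        (Real.cos (2 * π * s / l) * (2 * π / l)) s := (Real.hasDerivAt_sin _).comp s h1
    have h3 : HasDerivAt F (A + B * (l / (2 * π)) * (Real.cos (2 * π * s / l) * (2 * π / l))) s := by
      have h3' := ((hasDerivAt_id s).const_mul A).add (h2.const_mul (B * (l / (2 * π))))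
      simp only [mul_one] at h3'
      exact h3'
    convert h3 using 1
    have harg : 2 * π * s / l = 2 * (π * s / l) := by ring
    simp only [hRdef]
    rw [harg, Real.cos_two_mul, Real.sin_sq]
    have hπ : π ≠ 0 := Real.pi_ne_zero
    simp only [hAdef, hBdef]
    field_simp [hl.ne']
    ring
  have hcomp : ∫ s in (0:ℝ)..l, R s = A * l := by
    rw [intervalIntegral.integral_eq_sub_of_hasDerivAt hFderiv hint2]
    simp only [hFdef]
    rw [mul_div_assoc (2 * π) l l, div_self hl.ne', mul_one, Real.sin_two_pi]
    simp
  rw [hcomp] at hmono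
  -- conclude
  have hA : 0 ≤ A := by
    by_contra hA
    push_neg at hA
    nlinarith [le_trans h0 hmono]
  have hl2 : (0:ℝ) < l ^ 2 := by positivity
  have h5 : (π / l) ^ 2 * l ^ 2 = π ^ 2 := by field_simp
  have hKl : 3 * K * l ^ 2 ≤ 4 * π ^ 2 := by
    rw [hAdef] at hA
    nlinarith [mul_nonneg hA hl2.le, h5]
  have h3K : (0:ℝ) < 3 * K := by linarith
  have hs3 : 0 < Real.sqrt (3 * K) := Real.sqrt_pos.2 h3K
  rw [le_div_iff₀ hs3]
  have hsq : (l * Real.sqrt (3 * K)) ^ 2 ≤ (2 * π) ^ 2 := by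
    rw [mul_pow, Real.sq_sqrt h3K.le]
    nlinarith [hKl]
  have h2π : (0:ℝ) ≤ 2 * π := by positivity
  exact (pow_le_pow_iff_left₀ (by positivity) h2π two_ne_zero).mp hsq
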